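/- Let k be a field, A = k[x_1,...,x_n]/(x_1^{d_1},...,x_n^{d_n}), t = Σ_{i=1}^n (d_i − 1), and let s be a homogeneous form of degree d in A. Then multiplication by s has maximal rank (injective or surjective) as a map A_i → A_{i+d} for every i if and only if it is injective for all i ≤ (t − d)/2. -/

import Mathlib

open MvPolynomial

/-- The monomial complete intersection ideal `(x_1^{d_1}, ..., x_n^{d_n})`. -/
noncomputable def pideal (k : Type) [Field k] {n : ℕ} (d : Fin n → ℕ) :
    Ideal (MvPolynomial (Fin n) k) :=
  Ideal.span (Set.range fun i => (X i : MvPolynomial (Fin n) k) ^ d i)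

/-- The degree-`i` graded component of the quotient `k[x_1,...,x_n]/I`,
viewed as the image of the homogeneous degree-`i` polynomials. -/
noncomputable def qcomp (k : Type) [Field k] {n : ℕ}
    (I : Ideal (MvPolynomial (Fin n) k)) (i : ℕ) :
    Submodule k (MvPolynomial (Fin n) k ⧸ I) :=
  Submodule.map (Ideal.Quotient.mkₐ k I).toLinearMap
    (homogeneousSubmodule (Fin n) k i)

/-- The degree-`i` graded component of `k[x_1,...,x_n]/(x_1^{d_1},...,x_n^{d_n})`. -/
noncomputable def comp (k : Type) [Field k] {n : ℕ} (d : Fin n → ℕ) (i : ℕ) :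
    Submodule k (MvPolynomial (Fin n) k ⧸ pideal k d) :=
  qcomp k (pideal k d) i

/-- Multiplication by `s`, as a map from the subspace `V` to the subspace `W`,
has maximal rank: it is injective or surjective. -/
def maxRankOn {k Q : Type} [Field k] [CommRing Q] [Module k Q]
    (s : Q) (V W : Submodule k Q) : Prop :=
  (∀ f ∈ V, s * f = 0 → f = 0) ∨ (∀ g ∈ W, ∃ f ∈ V, s * f = g)


section Comb
open Finset

/-- Number of points in the box `∏ [0, d j - 1]` with coordinate sum `i`. -/
noncomputable def hfun {n : ℕ} (d : Fin n → ℕ) (i : ℤ) : ℕ :=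
  Nat.card {a : (j : Fin n) → Fin (d j) // ∑ j, ((a j : ℕ) : ℤ) = i}

lemma hfun_neg {n : ℕ} (d : Fin n → ℕ) {i : ℤ} (hi : i < 0) : hfun d i = 0 := by
  rw [hfun, Nat.card_eq_zero]
  left
  constructor
  rintro ⟨a, ha⟩
  have : (0 : ℤ) ≤ ∑ j, ((a j : ℕ) : ℤ) := Finset.sum_nonneg fun j _ => Int.ofNat_nonneg _
  omega

lemma hfun_symm {n : ℕ} (d : Fin n → ℕ) (hd : ∀ j, 1 ≤ d j) (i : ℤ) :
    hfun d i = hfun d ((∑ j, ((d j : ℤ) - 1)) - i) := by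
  apply Nat.card_congr
  refine ⟨fun a => ⟨fun j => (a.1 j).rev, ?_⟩, fun a => ⟨fun j => (a.1 j).rev, ?_⟩, ?_, ?_⟩
  · obtain ⟨a, ha⟩ := a
    simp only [Fin.val_rev]
    rw [← ha, ← Finset.sum_sub_distrib]
    apply Finset.sum_congr rfl
    intro j _
    have h1 := (a j).isLt
    push_cast [Nat.cast_sub (by omega : (a j : ℕ) + 1 ≤ d j)]
    ring
  · obtain ⟨a, ha⟩ := a
    simp only [Fin.val_rev]
    have key : ∀ j : Fin n, ((d j - ((a j : ℕ) + 1) : ℕ) : ℤ) = (d j : ℤ) - 1 - ((a j : ℕ) : ℤ) := by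
      intro j
      have h1 := (a j).isLt
      omega
    calc ∑ j, ((a j).rev : ℤ) = ∑ j, ((d j : ℤ) - 1 - ((a j : ℕ) : ℤ)) := by
          apply Finset.sum_congr rfl; intro j _; rw [Fin.val_rev]; exact key j
      _ = (∑ j, ((d j : ℤ) - 1)) - ∑ j, ((a j : ℕ) : ℤ) := by rw [← Finset.sum_sub_distrib]
      _ = i := by rw [ha]; ring
  · intro a; ext j; simp [Fin.rev_rev]
  · intro a; ext j; simp [Fin.rev_rev]

lemma hfun_rec {n : ℕ} (d : Fin (n + 1) → ℕ) (i : ℤ) :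
    hfun d i = ∑ c ∈ Finset.range (d (Fin.last n)),
      hfun (fun j : Fin n => d j.castSucc) (i - c) := by
  classical
  have e : {a : (j : Fin (n+1)) → Fin (d j) // ∑ j, ((a j : ℕ) : ℤ) = i} ≃
      Σ c : Fin (d (Fin.last n)),
        {a : (j : Fin n) → Fin (d j.castSucc) // ∑ j, ((a j : ℕ) : ℤ) = i - c} := by
    refine ⟨fun a => ⟨a.1 (Fin.last n), ⟨fun j => a.1 j.castSucc, ?_⟩⟩,
      fun ca => ⟨Fin.snoc ca.2.1 ca.1, ?_⟩, ?_, ?_⟩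
    · have h := a.2
      rw [Fin.sum_univ_castSucc] at h
      show (∑ j : Fin n, ((a.1 j.castSucc : ℕ) : ℤ)) = i - ((a.1 (Fin.last n) : ℕ) : ℤ)
      omega
    · rw [Fin.sum_univ_castSucc]
      have h1 : ∀ j : Fin n, (Fin.snoc (α := fun j : Fin (n+1) => Fin (d j)) ca.2.1 ca.1)
          j.castSucc = ca.2.1 j := fun j => Fin.snoc_castSucc _ _ _
      have h2 : (Fin.snoc (α := fun j : Fin (n+1) => Fin (d j)) ca.2.1 ca.1) (Fin.last n)
          = ca.1 := Fin.snoc_last _ _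
      have := ca.2.2
      calc (∑ j : Fin n, (((Fin.snoc (α := fun j : Fin (n+1) => Fin (d j)) ca.2.1 ca.1)
              j.castSucc : ℕ) : ℤ)) + (((Fin.snoc (α := fun j : Fin (n+1) => Fin (d j))
              ca.2.1 ca.1) (Fin.last n) : ℕ) : ℤ)
          = (∑ j : Fin n, ((ca.2.1 j : ℕ) : ℤ)) + ((ca.1 : ℕ) : ℤ) := by
            rw [h2]; congr 1; exact Finset.sum_congr rfl fun j _ => by rw [h1]
        _ = i := by omega
    · intro a
      ext j
      refine Fin.lastCases ?_ ?_ j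
      · simp
      · intro j; simp
    · rintro ⟨c, a, ha⟩
      refine Sigma.ext ?_ ?_
      · simp
      · rw [Subtype.heq_iff_coe_eq]
        · ext j; simp
        · intro x; simp
  rw [hfun, Nat.card_congr e, Nat.card_eq_fintype_card, Fintype.card_sigma,
    Fin.sum_univ_eq_sum_range (fun c : ℕ =>
      Fintype.card {a : (j : Fin n) → Fin (d j.castSucc) // ∑ j, ((a j : ℕ) : ℤ) = i - c})]
  apply Finset.sum_congr rfl
  intro c _
  rw [hfun, Nat.card_eq_fintype_card]

lemma dominance_of_mono_symm (h : ℤ → ℕ) (t : ℤ)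
    (hsymm : ∀ i, h i = h (t - i))
    (hmono : ∀ i : ℤ, 2 * (i + 1) ≤ t → h i ≤ h (i + 1)) :
    ∀ i j : ℤ, i ≤ j → i + j ≤ t → h i ≤ h j := by
  have mono' : ∀ (m : ℕ) (i : ℤ), 2 * (i + m) ≤ t → h i ≤ h (i + m) := by
    intro m
    induction m with
    | zero => intro i _; simp
    | succ m ih =>
        intro i hle
        have hm : ((m + 1 : ℕ) : ℤ) = (m : ℤ) + 1 := by push_cast; ring
        have h1 : h i ≤ h (i + m) := ih i (by omega)
        have h2 : h (i + m) ≤ h (i + m + 1) := hmono _ (by omega)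
        calc h i ≤ h (i + m + 1) := le_trans h1 h2
          _ = h (i + ((m + 1 : ℕ) : ℤ)) := by rw [hm]; ring_nf
  intro i j hij hijt
  by_cases hj : 2 * j ≤ t
  · have hc : i + (((j - i).toNat : ℕ) : ℤ) = j := by omega
    have := mono' (j - i).toNat i (by omega)
    rwa [hc] at this
  · rw [hsymm j]
    have hc : i + (((t - j - i).toNat : ℕ) : ℤ) = t - j := by omega
    have := mono' (t - j - i).toNat i (by omega)
    rwa [hc] at this

lemma hfun_mono : ∀ {n : ℕ} (d : Fin n → ℕ), (∀ j, 1 ≤ d j) → ∀ i : ℤ,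
    2 * (i + 1) ≤ ∑ j, ((d j : ℤ) - 1) → hfun d i ≤ hfun d (i + 1) := by
  intro n
  induction n with
  | zero =>
      intro d hd i hi
      simp only [Finset.univ_eq_empty, Finset.sum_empty] at hi
      rw [hfun_neg d (by omega : i < 0)]
      exact Nat.zero_le _
  | succ n ih =>
      intro d hd i hi
      set d' := fun j : Fin n => d j.castSucc with hd'def
      have hd' : ∀ j, 1 ≤ d' j := fun j => hd _
      set t' := ∑ j, ((d' j : ℤ) - 1) with ht'
      have hsymm : ∀ i : ℤ, hfun d' i = hfun d' (t' - i) := fun i => hfun_symm d' hd' i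
      have dom := dominance_of_mono_symm (hfun d') t' hsymm (ih d' hd')
      have htt : ∑ j : Fin (n+1), ((d j : ℤ) - 1) = t' + ((d (Fin.last n) : ℤ) - 1) := by
        rw [Fin.sum_univ_castSucc]
      rw [hfun_rec d i, hfun_rec d (i+1)]
      obtain ⟨mm, hmm⟩ := Nat.exists_eq_add_of_le (hd (Fin.last n))
      rw [(by omega : d (Fin.last n) = mm + 1)]
      have hG : ∀ c : ℕ, hfun d' (i + 1 - ((c + 1 : ℕ) : ℤ)) = hfun d' (i - (c : ℕ)) := by
        intro c; congr 1; push_cast; ring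
      rw [Finset.sum_range_succ (fun c : ℕ => hfun d' (i - (c : ℕ))) mm,
        Finset.sum_range_succ' (fun c : ℕ => hfun d' (i + 1 - (c : ℕ))) mm]
      have hsum : ∀ c ∈ Finset.range mm,
          hfun d' (i + 1 - ((c + 1 : ℕ) : ℤ)) = hfun d' (i - (c : ℕ)) := fun c _ => hG c
      rw [Finset.sum_congr rfl hsum]
      have key : hfun d' (i - (mm : ℕ)) ≤ hfun d' (i + 1 - ((0 : ℕ) : ℤ)) := by
        have h1 : i - (mm : ℤ) ≤ i + 1 - ((0:ℕ) : ℤ) := by push_cast; omega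
        have h2 : (i - (mm : ℤ)) + (i + 1 - ((0:ℕ) : ℤ)) ≤ t' := by
          have hdl : (d (Fin.last n) : ℤ) = (mm : ℤ) + 1 := by
            rw [(by omega : d (Fin.last n) = mm + 1)]; push_cast; ring
          rw [htt, hdl] at hi
          push_cast
          omega
        exact dom _ _ h1 h2
      omega

lemma hfun_dom {n : ℕ} (d : Fin n → ℕ) (hd : ∀ j, 1 ≤ d j) {i j : ℤ}
    (hij : i ≤ j) (hijt : i + j ≤ ∑ l, ((d l : ℤ) - 1)) : hfun d i ≤ hfun d j :=
  dominance_of_mono_symm (hfun d) _ (hfun_symm d hd) (hfun_mono d hd) i j hij hijt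

end Comb

section Alg

variable {k : Type} [Field k] {n : ℕ}

lemma mem_pideal_iff (d : Fin n → ℕ) (f : MvPolynomial (Fin n) k) :
    f ∈ pideal k d ↔ ∀ a : Fin n →₀ ℕ, (∀ j, a j < d j) → coeff a f = 0 := by
  constructor
  · intro hf a ha
    rw [pideal, Ideal.mem_span_range_iff_exists_fun] at hf
    obtain ⟨c, hc⟩ := hf
    rw [← hc, coeff_sum]
    apply Finset.sum_eq_zero
    intro j _
    rw [X_pow_eq_monomial, coeff_mul_monomial']
    rw [if_neg]
    rw [Finsupp.single_le_iff]
    exact Nat.not_le.mpr (ha j)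
  · intro h
    rw [as_sum f]
    apply Ideal.sum_mem
    intro a ha
    have hcoeff : coeff a f ≠ 0 := mem_support_iff.mp ha
    have : ¬ (∀ j, a j < d j) := fun hg => hcoeff (h a hg)
    push_neg at this
    obtain ⟨j, hj⟩ := this
    have hle : Finsupp.single j (d j) ≤ a := Finsupp.single_le_iff.mpr hj
    have : monomial a (coeff a f) =
        monomial (a - Finsupp.single j (d j)) (coeff a f) * (X j ^ d j) := by
      rw [X_pow_eq_monomial, monomial_mul, mul_one, tsub_add_cancel_of_le hle]
    rw [this]
    exact Ideal.mul_mem_left _ _ (Ideal.subset_span ⟨j, rfl⟩)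

end Alg

section Alg2

variable {k : Type} [Field k] {n : ℕ}

/-- The top socle exponent `(d 1 - 1, ..., d n - 1)`. -/
noncomputable def Dtop (d : Fin n → ℕ) : Fin n →₀ ℕ :=
  Finsupp.equivFunOnFinite.symm (fun j => d j - 1)

lemma Dtop_apply (d : Fin n → ℕ) (j : Fin n) : Dtop d j = d j - 1 := rfl

lemma Dtop_degree (d : Fin n → ℕ) : (Dtop d).degree = ∑ j, (d j - 1) := by
  rw [Finsupp.degree]
  apply Finset.sum_subset (Finset.subset_univ _)
  intro j _ hj
  simpa [Dtop_apply] using Finsupp.notMem_support_iff.mp hj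

lemma coeff_Dtop_vanish (d : Fin n → ℕ) (hd : ∀ j, 1 ≤ d j) {f : MvPolynomial (Fin n) k}
    (hf : f ∈ pideal k d) : coeff (Dtop d) f = 0 := by
  refine (mem_pideal_iff d f).mp hf _ fun j => ?_
  have := hd j
  rw [Dtop_apply]
  omega

lemma coeff_eq_coeff_Dtop_mul (d : Fin n → ℕ) (f : MvPolynomial (Fin n) k)
    {a : Fin n →₀ ℕ} (ha : a ≤ Dtop d) :
    coeff (Dtop d) (f * monomial (Dtop d - a) 1) = coeff a f := by
  rw [coeff_mul_monomial', if_pos tsub_le_self, tsub_tsub_cancel_of_le ha, mul_one]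

/-- Nondegeneracy of the socle pairing, at the polynomial level. -/
lemma pair_nondeg (d : Fin n → ℕ) (hd : ∀ j, 1 ≤ d j) (f : MvPolynomial (Fin n) k)
    (h : ∀ b : Fin n →₀ ℕ, (∀ j, b j < d j) →
      coeff (Dtop d) (f * monomial b 1) = 0) : f ∈ pideal k d := by
  rw [mem_pideal_iff]
  intro a ha
  have hle : a ≤ Dtop d := by
    intro j
    have := ha j
    have := hd j
    rw [Dtop_apply]
    omega
  rw [← coeff_eq_coeff_Dtop_mul d f hle]
  refine h _ fun j => ?_
  have h1 : (Dtop d - a) j ≤ Dtop d j := by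
    rw [Finsupp.tsub_apply]
    omega
  have := hd j
  rw [Dtop_apply] at h1
  omega

lemma coeff_Dtop_of_ne (d : Fin n → ℕ) {f : MvPolynomial (Fin n) k} {m : ℕ}
    (hf : f.IsHomogeneous m) (hm : m ≠ ∑ j, (d j - 1)) : coeff (Dtop d) f = 0 := by
  apply hf.coeff_eq_zero
  rw [Dtop_degree]
  exact fun h => hm h.symm

lemma mem_comp_iff (d : Fin n → ℕ) (i : ℕ) (x : MvPolynomial (Fin n) k ⧸ pideal k d) :
    x ∈ comp k d i ↔ ∃ f : MvPolynomial (Fin n) k,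
      f.IsHomogeneous i ∧ Ideal.Quotient.mk (pideal k d) f = x := by
  constructor
  · rintro ⟨f, hf, rfl⟩
    exact ⟨f, (mem_homogeneousSubmodule _ _).mp hf, rfl⟩
  · rintro ⟨f, hf, rfl⟩
    exact ⟨f, (mem_homogeneousSubmodule _ _).mpr hf, rfl⟩

end Alg2

section Phibar
set_option synthInstance.maxHeartbeats 1000000
set_option maxHeartbeats 1000000

variable {k : Type} [Field k] {n : ℕ}

/-- The socle functional on the quotient ring. -/
noncomputable def phibar (d : Fin n → ℕ) (hd : ∀ j, 1 ≤ d j) :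
    (MvPolynomial (Fin n) k ⧸ pideal k d) →ₗ[k] k :=
  (Submodule.liftQ ((pideal k d).restrictScalars k) (lcoeff k (Dtop d))
      (fun f hf => coeff_Dtop_vanish d hd hf)).comp
    (Submodule.Quotient.restrictScalarsEquiv k (pideal k d)).symm.toLinearMap

lemma phibar_mk (d : Fin n → ℕ) (hd : ∀ j, 1 ≤ d j) (f : MvPolynomial (Fin n) k) :
    phibar d hd (Ideal.Quotient.mk (pideal k d) f) = coeff (Dtop d) f := by
  rfl

end Phibar

section BasisSec
set_option synthInstance.maxHeartbeats 1000000
set_option maxHeartbeats 1000000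

variable {k : Type} [Field k] {n : ℕ}

lemma degree_eq_sum_univ (a : Fin n →₀ ℕ) : a.degree = ∑ j, a j := by
  rw [Finsupp.degree]
  apply Finset.sum_subset (Finset.subset_univ _)
  intro j _ hj
  exact Finsupp.notMem_support_iff.mp hj

noncomputable def goodEquiv (d : Fin n → ℕ) (i : ℕ) :
    {a : Fin n →₀ ℕ // (∀ j, a j < d j) ∧ a.degree = i} ≃
      {a : (j : Fin n) → Fin (d j) // ∑ j, ((a j : ℕ) : ℤ) = (i : ℤ)} where
  toFun a := ⟨fun j => ⟨a.1 j, a.2.1 j⟩, by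
    have h1 := a.2.2
    rw [degree_eq_sum_univ] at h1
    have : ∑ j, (((⟨a.1 j, a.2.1 j⟩ : Fin (d j)) : ℕ) : ℤ) = ((∑ j, a.1 j : ℕ) : ℤ) := by
      push_cast; rfl
    rw [this, h1]⟩
  invFun a := ⟨Finsupp.equivFunOnFinite.symm (fun j => (a.1 j : ℕ)), by
    constructor
    · intro j
      exact (a.1 j).isLt
    · rw [degree_eq_sum_univ]
      have h1 := a.2
      have : ((∑ j, ((Finsupp.equivFunOnFinite.symm (fun j => ((a.1 j : ℕ)))) j) : ℕ) : ℤ)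
          = ∑ j, ((a.1 j : ℕ) : ℤ) := by push_cast; rfl
      rw [h1] at this
      exact_mod_cast this⟩
  left_inv a := by
    ext j
    simp [Finsupp.equivFunOnFinite]
  right_inv a := by
    ext j
    simp [Finsupp.equivFunOnFinite]
    rfl

noncomputable instance goodFintype (d : Fin n → ℕ) (i : ℕ) :
    Fintype {a : Fin n →₀ ℕ // (∀ j, a j < d j) ∧ a.degree = i} :=
  Fintype.ofEquiv _ (goodEquiv d i).symm

lemma card_good (d : Fin n → ℕ) (i : ℕ) :
    Fintype.card {a : Fin n →₀ ℕ // (∀ j, a j < d j) ∧ a.degree = i} = hfun d (i : ℤ) := by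
  rw [hfun, Nat.card_eq_fintype_card]
  exact Fintype.card_congr (goodEquiv d i)

lemma monomial_mem_pideal (d : Fin n → ℕ) {b : Fin n →₀ ℕ} (c : k)
    (hb : ¬ ∀ j, b j < d j) : monomial b c ∈ pideal k d := by
  rw [mem_pideal_iff]
  intro a ha
  rw [coeff_monomial]
  split_ifs with h
  · exact absurd (fun j => h ▸ ha j) hb
  · rfl

lemma linindep_good (d : Fin n → ℕ) (i : ℕ) :
    LinearIndependent k (fun a : {a : Fin n →₀ ℕ // (∀ j, a j < d j) ∧ a.degree = i} =>
      Ideal.Quotient.mk (pideal k d) (monomial a.1 1)) := by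
  rw [Fintype.linearIndependent_iff]
  intro c hc a₀
  have h1 : (Ideal.Quotient.mk (pideal k d))
      (∑ a : {a : Fin n →₀ ℕ // (∀ j, a j < d j) ∧ a.degree = i}, monomial a.1 (c a)) = 0 := by
    rw [map_sum, ← hc]
    apply Finset.sum_congr rfl
    intro a _
    have h3 : (monomial a.1 (c a)) = c a • monomial a.1 1 := by
      rw [smul_monomial, smul_eq_mul, mul_one]
    rw [h3, ← Ideal.Quotient.mkₐ_eq_mk k, map_smul]
  rw [Ideal.Quotient.eq_zero_iff_mem, mem_pideal_iff] at h1
  have h2 := h1 a₀.1 a₀.2.1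
  rw [coeff_sum] at h2
  rw [← h2, Finset.sum_eq_single a₀]
  · rw [coeff_monomial, if_pos rfl]
  · intro a _ hne
    rw [coeff_monomial, if_neg]
    exact fun h => hne (Subtype.ext h)
  · intro h
    exact absurd (Finset.mem_univ a₀) h

lemma comp_eq_span (d : Fin n → ℕ) (i : ℕ) :
    comp k d i = Submodule.span k (Set.range
      (fun a : {a : Fin n →₀ ℕ // (∀ j, a j < d j) ∧ a.degree = i} =>
        Ideal.Quotient.mk (pideal k d) (monomial a.1 1))) := by
  apply le_antisymm
  · rintro x hx
    rw [mem_comp_iff] at hx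
    obtain ⟨f, hf, rfl⟩ := hx
    rw [as_sum f, map_sum]
    apply Submodule.sum_mem
    intro b hb
    by_cases hgood : ∀ j, b j < d j
    · have hdeg : b.degree = i := by
        have h4 := hf (mem_support_iff.mp hb)
        rw [Finsupp.degree_eq_weight_one]; exact h4
      have h3 : (monomial b (coeff b f)) = coeff b f • monomial b 1 := by
        rw [smul_monomial, smul_eq_mul, mul_one]
      rw [h3, ← Ideal.Quotient.mkₐ_eq_mk k, map_smul]
      exact Submodule.smul_mem _ _ (Submodule.subset_span ⟨⟨b, hgood, hdeg⟩, rfl⟩)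
    · rw [Ideal.Quotient.eq_zero_iff_mem.mpr (monomial_mem_pideal d _ hgood)]
      exact Submodule.zero_mem _
  · rw [Submodule.span_le]
    rintro x ⟨a, rfl⟩
    exact (mem_comp_iff d i _).mpr ⟨monomial a.1 1, isHomogeneous_monomial 1 a.2.2, rfl⟩

instance comp_finiteDimensional (d : Fin n → ℕ) (i : ℕ) :
    FiniteDimensional k (comp k d i) := by
  rw [comp_eq_span d i]
  exact FiniteDimensional.span_of_finite k (Set.finite_range _)

lemma finrank_comp (d : Fin n → ℕ) (i : ℕ) :
    Module.finrank k (comp k d i) = hfun d (i : ℤ) := by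
  rw [comp_eq_span d i, finrank_span_eq_card (linindep_good d i), card_good]

end BasisSec

section Machinery
set_option synthInstance.maxHeartbeats 1000000
set_option maxHeartbeats 1000000

variable {k : Type} [Field k] {n : ℕ}

lemma tcast (d : Fin n → ℕ) (hd : ∀ j, 1 ≤ d j) :
    ((∑ l, (d l - 1) : ℕ) : ℤ) = ∑ l, ((d l : ℤ) - 1) := by
  push_cast [Nat.cast_sum]
  apply Finset.sum_congr rfl
  intro l _
  have := hd l
  omega

lemma comp_eq_bot (d : Fin n → ℕ) (hd : ∀ j, 1 ≤ d j) {i : ℕ}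
    (hi : ∑ l, (d l - 1) < i) : comp k d i = ⊥ := by
  rw [← Submodule.finrank_eq_zero (R := k), finrank_comp]
  rw [hfun_symm d hd]
  apply hfun_neg
  rw [← tcast d hd]
  omega

lemma mk_mul_mem_comp (d : Fin n → ℕ) {e : ℕ} {S : MvPolynomial (Fin n) k}
    (hS : S.IsHomogeneous e) (i : ℕ) {x : MvPolynomial (Fin n) k ⧸ pideal k d}
    (hx : x ∈ comp k d i) : Ideal.Quotient.mk (pideal k d) S * x ∈ comp k d (i + e) := by
  obtain ⟨f, hf, rfl⟩ := (mem_comp_iff d i x).mp hx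
  refine (mem_comp_iff d (i + e) _).mpr ⟨S * f, ?_, map_mul _ _ _⟩
  have := hS.mul hf
  rwa [add_comm] at this

/-- Multiplication by `S` as a linear map between graded components. -/
noncomputable def mulMap (d : Fin n → ℕ) {e : ℕ} {S : MvPolynomial (Fin n) k}
    (hS : S.IsHomogeneous e) (i : ℕ) : comp k d i →ₗ[k] comp k d (i + e) :=
  LinearMap.restrict (LinearMap.mulLeft k (Ideal.Quotient.mk (pideal k d) S))
    (fun _ hx => mk_mul_mem_comp d hS i hx)

lemma mulMap_apply (d : Fin n → ℕ) {e : ℕ} {S : MvPolynomial (Fin n) k}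
    (hS : S.IsHomogeneous e) (i : ℕ) (x : comp k d i) :
    (mulMap d hS i x : MvPolynomial (Fin n) k ⧸ pideal k d) =
      Ideal.Quotient.mk (pideal k d) S * x := rfl

/-- The pairing map `A_j → (A_i)*`, `f ↦ (u ↦ φ(f u))`. -/
noncomputable def pairMap (d : Fin n → ℕ) (hd : ∀ j, 1 ≤ d j) (i j : ℕ) :
    comp k d j →ₗ[k] Module.Dual k (comp k d i) where
  toFun f := (phibar d hd).comp ((LinearMap.mulLeft k
    (f : MvPolynomial (Fin n) k ⧸ pideal k d)).comp (comp k d i).subtype)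
  map_add' f g := by
    ext u
    simp [add_mul]
  map_smul' c f := by
    ext u
    simp [smul_mul_assoc]

lemma pairMap_apply (d : Fin n → ℕ) (hd : ∀ j, 1 ≤ d j) (i j : ℕ)
    (f : comp k d j) (u : comp k d i) :
    pairMap d hd i j f u = phibar d hd ((f : MvPolynomial (Fin n) k ⧸ pideal k d) *
      (u : MvPolynomial (Fin n) k ⧸ pideal k d)) := rfl

lemma pairMap_injective (d : Fin n → ℕ) (hd : ∀ j, 1 ≤ d j) {i j : ℕ}
    (hij : i + j = ∑ l, (d l - 1)) : Function.Injective (pairMap (k := k) d hd i j) := by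
  rw [injective_iff_map_eq_zero (pairMap (k := k) d hd i j)]
  intro f hf
  obtain ⟨f₀, hf₀, hmk⟩ := (mem_comp_iff d j f.1).mp f.2
  apply Subtype.ext
  show (f : MvPolynomial (Fin n) k ⧸ pideal k d) = 0
  rw [← hmk, Ideal.Quotient.eq_zero_iff_mem]
  apply pair_nondeg d hd
  intro b hb
  by_cases hbd : b.degree = i
  · have hmem : Ideal.Quotient.mk (pideal k d) (monomial b 1) ∈ comp k d i :=
      (mem_comp_iff d i _).mpr ⟨monomial b 1, isHomogeneous_monomial 1 hbd, rfl⟩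
    have h0 : pairMap (k := k) d hd i j f ⟨_, hmem⟩ = 0 := by rw [hf]; rfl
    rw [pairMap_apply, ← hmk, ← map_mul, phibar_mk] at h0
    exact h0
  · apply coeff_Dtop_of_ne d (hf₀.mul (isHomogeneous_monomial 1 rfl))
    omega

lemma pairMap_surjective (d : Fin n → ℕ) (hd : ∀ j, 1 ≤ d j) {i j : ℕ}
    (hij : i + j = ∑ l, (d l - 1)) : Function.Surjective (pairMap (k := k) d hd i j) := by
  have hfr : Module.finrank k (comp k d j) = Module.finrank k (Module.Dual k (comp k d i)) := by
    rw [Subspace.dual_finrank_eq (K := k) (V := comp k d i), finrank_comp, finrank_comp,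
      hfun_symm d hd (j : ℤ)]
    congr 1
    rw [← tcast d hd]
    omega
  exact (LinearMap.injective_iff_surjective_of_finrank_eq_finrank hfr).mp
    (pairMap_injective d hd hij)

end Machinery


set_option maxHeartbeats 1000000
set_option synthInstance.maxHeartbeats 1000000

theorem stmt7 {k : Type} [Field k] {n : ℕ}
    (d : Fin n → ℕ) (hd : ∀ i, 1 ≤ d i) (t : ℕ) (ht : t = ∑ i, (d i - 1))
    (e : ℕ) (S : MvPolynomial (Fin n) k) (hS : S.IsHomogeneous e) :
    (∀ i, maxRankOn (Ideal.Quotient.mk (pideal k d) S)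
        (comp k d i) (comp k d (i + e))) ↔
    (∀ i, 2 * i + e ≤ t →
      ∀ f ∈ comp k d i, Ideal.Quotient.mk (pideal k d) S * f = 0 → f = 0) := by
  constructor
  · intro H i hi
    rcases H i with hinj | hsur
    · exact hinj
    · intro f hf hSf
      have hmsur : Function.Surjective (mulMap (k := k) d hS i) := by
        intro u
        obtain ⟨g, hg, hgu⟩ := hsur u.1 u.2
        exact ⟨⟨g, hg⟩, Subtype.ext hgu⟩
      have hr1 : Module.finrank k (comp k d (i + e)) ≤ Module.finrank k (comp k d i) := by
        have h5 := LinearMap.finrank_range_le (mulMap (k := k) d hS i)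
        rwa [LinearMap.range_eq_top.mpr hmsur, finrank_top] at h5
      have hr2 : hfun d (i : ℤ) ≤ hfun d ((i + e : ℕ) : ℤ) := by
        apply hfun_dom d hd
        · push_cast; omega
        · rw [← tcast d hd, ← ht]; push_cast; omega
      have heq : Module.finrank k (comp k d i) = Module.finrank k (comp k d (i + e)) := by
        apply le_antisymm _ hr1
        rw [finrank_comp, finrank_comp]
        exact hr2
      have hminj : Function.Injective (mulMap (k := k) d hS i) :=
        (LinearMap.injective_iff_surjective_of_finrank_eq_finrank heq).mpr hmsur
      have hz : mulMap (k := k) d hS i ⟨f, hf⟩ = 0 :=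
        Subtype.ext (by rw [mulMap_apply]; exact hSf)
      have h0 : (⟨f, hf⟩ : comp k d i) = 0 := hminj (by rw [hz, map_zero])
      exact congrArg Subtype.val h0
  · intro H i
    by_cases hi : 2 * i + e ≤ t
    · exact Or.inl (H i hi)
    · right
      by_cases hie : i + e ≤ t
      · set j := t - i - e with hj
        have hj2 : 2 * j + e ≤ t := by omega
        have hInj := H j hj2
        have hmsur : Function.Surjective (mulMap (k := k) d hS i) := by
          by_contra hns
          have hlt : LinearMap.range (mulMap (k := k) d hS i) < ⊤ :=
            lt_top_iff_ne_top.mpr (fun h => hns (LinearMap.range_eq_top.mp h))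
          obtain ⟨ξ, hξ0, hξ⟩ := Submodule.exists_dual_map_eq_bot_of_lt_top hlt inferInstance
          obtain ⟨F, hF⟩ := pairMap_surjective (k := k) d hd
            (show (i + e) + j = ∑ l, (d l - 1) by rw [← ht]; omega) ξ
          have hFne : F ≠ 0 := by
            rintro rfl
            rw [map_zero] at hF
            exact hξ0 hF.symm
          obtain ⟨f₀, hf₀, hmk⟩ := (mem_comp_iff d j F.1).mp F.2
          have hSF : Ideal.Quotient.mk (pideal k d) S * F.1 = 0 := by
            rw [← hmk, ← map_mul, Ideal.Quotient.eq_zero_iff_mem]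
            apply pair_nondeg d hd
            intro b hb
            by_cases hbd : b.degree = i
            · have hmem : Ideal.Quotient.mk (pideal k d) (monomial b 1) ∈ comp k d i :=
                (mem_comp_iff d i _).mpr ⟨monomial b 1, isHomogeneous_monomial 1 hbd, rfl⟩
              set u := mulMap (k := k) d hS i ⟨_, hmem⟩ with hu
              have huz : ξ u = 0 := by
                have hmem2 : ξ u ∈ Submodule.map ξ (LinearMap.range (mulMap (k := k) d hS i)) :=
                  Submodule.mem_map_of_mem ⟨_, rfl⟩
                rw [hξ] at hmem2
                exact (Submodule.mem_bot k).mp hmem2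
              calc coeff (Dtop d) (S * f₀ * monomial b 1)
                  = phibar d hd (Ideal.Quotient.mk (pideal k d) (S * f₀ * monomial b 1)) :=
                    (phibar_mk d hd _).symm
                _ = pairMap (k := k) d hd (i + e) j F u := by
                    rw [pairMap_apply]
                    congr 1
                    rw [← hmk, hu]
                    rw [mulMap_apply, map_mul, map_mul]
                    ring
                _ = ξ u := by rw [hF]
                _ = 0 := huz
            · apply coeff_Dtop_of_ne d ((hS.mul hf₀).mul (isHomogeneous_monomial 1 rfl))
              rw [← ht]
              omega
          have hF0 : F.1 = 0 := hInj F.1 F.2 hSF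
          exact hFne (Subtype.ext hF0)
        intro g hg
        obtain ⟨x, hx⟩ := hmsur ⟨g, hg⟩
        exact ⟨x.1, x.2, congrArg Subtype.val hx⟩
      · intro g hg
        rw [comp_eq_bot d hd (show ∑ l, (d l - 1) < i + e by omega : )] at hg
        rw [Submodule.mem_bot] at hg
        subst hg
        exact ⟨0, Submodule.zero_mem _, mul_zero _⟩
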